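/- Let F : ℝⁿ → ℝ be twice differentiable with an L₂-Lipschitz Hessian (L₂ > 0). Let z ∈ ℝⁿ, g := ∇F(z), H := ∇²F(z), and suppose λ < 0 is the minimum eigenvalue of the symmetric matrix H with corresponding unit eigenvector v (Hv = λv, ‖v‖ = 1). Let s ∈ {−1, +1} be chosen so that ⟨g, s·(2λ/L₂)v⟩ ≤ 0, and set u := s·(2λ/L₂)v. Then F(z + u) − F(z) ≤ 2λ³/(3L₂²). (Note that the right-hand side is negative since λ < 0.) -/

import Mathlib

open RealInnerProductSpace

/- Euclidean (nearest-point) projection onto a set `K`.  For a nonempty closed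
convex set in a complete inner product space this is the usual orthogonal
projection onto `K`. -/
open Classical in
noncomputable def projOn {E : Type*} [NormedAddCommGroup E] [InnerProductSpace ℝ E]
    (K : Set E) (u : E) : E :=
  if h : ∃ v, v ∈ K ∧ ∀ w ∈ K, ‖u - v‖ ≤ ‖u - w‖ then h.choose else u

/- The `(K, η)`-projected gradient of `f` at `x`:
`∇_{K,η} f(x) = (1/η) (x − Π_K[x − η ∇f(x)])`. -/
noncomputable def projGrad {E : Type*} [NormedAddCommGroup E] [InnerProductSpace ℝ E]
    [CompleteSpace E] (K : Set E) (η : ℝ) (f : E → ℝ) (x : E) : E :=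
  (1 / η) • (x - projOn K (x - η • gradient f x))

/-- Cubic Taylor-type bound from a Lipschitz Hessian. -/
theorem taylor_cubic_bound {n : ℕ} (F : EuclideanSpace ℝ (Fin n) → ℝ)
    (L₂ : ℝ)
    (hF : Differentiable ℝ F) (hF' : Differentiable ℝ (gradient F))
    (hHess : ∀ x y, ‖fderiv ℝ (gradient F) x - fderiv ℝ (gradient F) y‖ ≤ L₂ * ‖x - y‖)
    (z u : EuclideanSpace ℝ (Fin n)) :
    F (z + u) ≤ F z + ⟪gradient F z, u⟫ + (1/2) * ⟪u, fderiv ℝ (gradient F) z u⟫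
      + L₂/6 * ‖u‖^3 := by
  set G := gradient F with hGdef
  set H := fderiv ℝ G z with hHdef
  have hline : ∀ t : ℝ, HasDerivAt (fun t : ℝ => z + t • u) u t := fun t => by
    simpa using ((hasDerivAt_id t).smul_const u).const_add z
  have hψ : ∀ t : ℝ, HasDerivAt (fun t : ℝ => F (z + t • u)) ⟪G (z + t • u), u⟫ t := by
    intro t
    have h1 := ((hF (z + t • u)).hasGradientAt.hasFDerivAt).comp_hasDerivAt t (hline t)
    exact h1.congr_deriv (by rw [InnerProductSpace.toDual_apply_apply])
  have hGd : ∀ t : ℝ, HasDerivAt (fun t : ℝ => G (z + t • u) - G z - t • H u)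
      (fderiv ℝ G (z + t • u) u - H u) t := by
    intro t
    have h1 := ((hF' (z + t • u)).hasFDerivAt).comp_hasDerivAt t (hline t)
    exact ((h1.sub_const (G z)).sub ((hasDerivAt_id t).smul_const (H u))).congr_deriv (by simp)
  -- level 1 : ‖G (z+t•u) - G z - t • H u‖ ≤ L₂ ‖u‖² t²/2 on [0,1]
  have key1 : ∀ t ∈ Set.Icc (0:ℝ) 1,
      ‖G (z + t • u) - G z - t • H u‖ ≤ L₂ * ‖u‖^2 / 2 * t^2 := by
    have hB : ∀ x : ℝ, HasDerivAt (fun t : ℝ => L₂ * ‖u‖^2 / 2 * t^2)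
        (L₂ * ‖u‖^2 * x) x := by
      intro x
      have := (hasDerivAt_pow 2 x).const_mul (L₂ * ‖u‖^2 / 2)
      simpa using this.congr_deriv (by ring)
    refine image_norm_le_of_norm_deriv_right_le_deriv_boundary
      (f := fun t : ℝ => G (z + t • u) - G z - t • H u)
      (f' := fun t : ℝ => fderiv ℝ G (z + t • u) u - H u)
      (fun t _ => (hGd t).continuousAt.continuousWithinAt)
      (fun t _ => (hGd t).hasDerivWithinAt) ?_ hB ?_
    · simp
    · intro t ht
      show ‖(fderiv ℝ G (z + t • u)) u - H u‖ ≤ L₂ * ‖u‖ ^ 2 * t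
      have h1 : (fderiv ℝ G (z + t • u)) u - H u = (fderiv ℝ G (z + t • u) - H) u := by
        simp [ContinuousLinearMap.sub_apply]
      rw [h1]
      calc ‖(fderiv ℝ G (z + t • u) - H) u‖
          ≤ ‖fderiv ℝ G (z + t • u) - H‖ * ‖u‖ := (fderiv ℝ G (z + t • u) - H).le_opNorm u
        _ ≤ (L₂ * ‖z + t • u - z‖) * ‖u‖ := by
            gcongr; exact hHess (z + t • u) z
        _ = L₂ * ‖u‖^2 * t := by
            have : ‖z + t • u - z‖ = t * ‖u‖ := by
              simp [norm_smul, abs_of_nonneg ht.1]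
            rw [this]; ring
  -- level 2 : compare with the cubic model
  set a : ℝ := ⟪G z, u⟫ with ha
  set b : ℝ := ⟪u, H u⟫ with hb
  have hHuu : ∀ t : ℝ, ⟪t • H u, u⟫ = t * ⟪H u, u⟫ := by
    intro t; rw [real_inner_smul_left]
  have hχ : ∀ t : ℝ, HasDerivAt
      (fun t : ℝ => F (z + t • u) - (t * a + t^2/2 * ⟪H u, u⟫ + t^3/6 * (L₂ * ‖u‖^3)))
      (⟪G (z + t • u), u⟫ - (a + t * ⟪H u, u⟫ + t^2/2 * (L₂ * ‖u‖^3))) t := by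
    intro t
    have hp : HasDerivAt
        (fun t : ℝ => t * a + t^2/2 * ⟪H u, u⟫ + t^3/6 * (L₂ * ‖u‖^3))
        (a + t * ⟪H u, u⟫ + t^2/2 * (L₂ * ‖u‖^3)) t := by
      have h1 := ((hasDerivAt_id t).mul_const a)
      have h2 := ((hasDerivAt_pow 2 t).div_const 2).mul_const (⟪H u, u⟫)
      have h3 := ((hasDerivAt_pow 3 t).div_const 6).mul_const (L₂ * ‖u‖^3)
      have := (h1.add h2).add h3
      refine this.congr_deriv ?_
      push_cast
      ring
    exact (hψ t).sub hp
  have hderiv_nonpos : ∀ t ∈ Set.Icc (0:ℝ) 1,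
      ⟪G (z + t • u), u⟫ - (a + t * ⟪H u, u⟫ + t^2/2 * (L₂ * ‖u‖^3)) ≤ 0 := by
    intro t ht
    have hW := key1 t ht
    have hsplit : ⟪G (z + t • u), u⟫
        = ⟪G (z + t • u) - G z - t • H u, u⟫ + a + t * ⟪H u, u⟫ := by
      rw [ha]
      rw [inner_sub_left, inner_sub_left, hHuu]
      ring
    have hcs : ⟪G (z + t • u) - G z - t • H u, u⟫ ≤ L₂ * ‖u‖^2 / 2 * t^2 * ‖u‖ :=
      le_trans (real_inner_le_norm _ _) (by gcongr)
    rw [hsplit]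
    have : L₂ * ‖u‖^2 / 2 * t^2 * ‖u‖ = t^2/2 * (L₂ * ‖u‖^3) := by ring
    linarith [this ▸ hcs]
  have hmono : ∀ t ∈ Set.Icc (0:ℝ) 1,
      (fun t : ℝ => F (z + t • u) - (t * a + t^2/2 * ⟪H u, u⟫ + t^3/6 * (L₂ * ‖u‖^3))) 1
      ≤ (fun t : ℝ => F (z + t • u) - (t * a + t^2/2 * ⟪H u, u⟫ + t^3/6 * (L₂ * ‖u‖^3))) 0 := by
    intro t ht
    have hanti : AntitoneOn
        (fun t : ℝ => F (z + t • u) - (t * a + t^2/2 * ⟪H u, u⟫ + t^3/6 * (L₂ * ‖u‖^3)))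
        (Set.Icc 0 1) := by
      apply antitoneOn_of_deriv_nonpos (convex_Icc 0 1)
      · exact fun x _ => (hχ x).continuousAt.continuousWithinAt
      · exact fun x _ => ((hχ x).differentiableAt).differentiableWithinAt
      · intro x hx
        rw [interior_Icc] at hx
        rw [(hχ x).deriv]
        exact hderiv_nonpos x ⟨le_of_lt hx.1, le_of_lt hx.2⟩
    exact hanti (by norm_num) (by norm_num) (by norm_num)
  have h0 := hmono 0 (by norm_num)
  simp only [one_smul, zero_smul, add_zero, one_pow, one_mul] at h0
  have hbsym : ⟪H u, u⟫ = ⟪u, H u⟫ := real_inner_comm _ _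
  have h00 : (0:ℝ) * a + (0:ℝ)^2/2 * ⟪H u, u⟫ + (0:ℝ)^3/6 * (L₂ * ‖u‖^3) = 0 := by ring
  rw [h00, sub_zero] at h0
  have hb1 : (1:ℝ)^2/2 * ⟪H u, u⟫ = (1/2) * ⟪u, H u⟫ := by rw [hbsym]; ring
  have hb2 : (1:ℝ)^3/6 * (L₂ * ‖u‖^3) = L₂/6 * ‖u‖^3 := by ring
  linarith [h0, hb1, hb2]

/-- Progress of a negative-curvature step: if `F` is twice
differentiable with `L₂`-Lipschitz Hessian, `λ < 0` is the minimum eigenvalue of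
the Hessian `H = ∇²F(z)` with unit eigenvector `v`, and `s ∈ {−1, +1}` is chosen
so that `⟨∇F(z), s (2λ/L₂) v⟩ ≤ 0`, then for `u = s (2λ/L₂) v`:
`F(z + u) − F(z) ≤ 2λ³/(3L₂²)`. -/
theorem second_order_step {n : ℕ} (F : EuclideanSpace ℝ (Fin n) → ℝ)
    (L₂ : ℝ) (hL₂ : 0 < L₂)
    (hF : Differentiable ℝ F) (hF' : Differentiable ℝ (gradient F))
    (hHess : ∀ x y, ‖fderiv ℝ (gradient F) x - fderiv ℝ (gradient F) y‖ ≤ L₂ * ‖x - y‖)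
    (z v : EuclideanSpace ℝ (Fin n)) (lam : ℝ) (hlam : lam < 0) (hv : ‖v‖ = 1)
    (heig : fderiv ℝ (gradient F) z v = lam • v)
    (hmin : ∀ (μ : ℝ) (u : EuclideanSpace ℝ (Fin n)),
      u ≠ 0 → fderiv ℝ (gradient F) z u = μ • u → lam ≤ μ)
    (s : ℝ) (hs : s = -1 ∨ s = 1)
    (hsign : ⟪gradient F z, s • ((2 * lam / L₂) • v)⟫ ≤ 0) :
    F (z + s • ((2 * lam / L₂) • v)) - F z ≤ 2 * lam ^ 3 / (3 * L₂ ^ 2) := by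
  set u : EuclideanSpace ℝ (Fin n) := s • ((2 * lam / L₂) • v) with hu
  have key := taylor_cubic_bound F L₂ hF hF' hHess z u
  have hnorm : ‖u‖ = -(2 * lam) / L₂ := by
    have h2 : 2 * lam / L₂ ≤ 0 := div_nonpos_iff.mpr (Or.inr ⟨by linarith, hL₂.le⟩)
    have habs : |2 * lam / L₂| = -(2 * lam) / L₂ := by
      rw [abs_of_nonpos h2]; ring
    rcases hs with h | h <;>
      simp [hu, h, norm_smul, hv, abs_of_neg hlam, abs_of_pos hL₂] <;>
      ring
  have hHu : fderiv ℝ (gradient F) z u = lam • u := by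
    rw [hu, map_smul, map_smul, heig, smul_comm lam, smul_comm lam]
  have hquad : ⟪u, fderiv ℝ (gradient F) z u⟫ = lam * ‖u‖^2 := by
    rw [hHu, real_inner_smul_right, real_inner_self_eq_norm_sq]
  rw [hquad, hnorm] at key
  have hL₂' : L₂ ≠ 0 := ne_of_gt hL₂
  have hfinal : lam * (-(2 * lam) / L₂)^2 / 2 + L₂/6 * (-(2 * lam) / L₂)^3
      = 2 * lam ^ 3 / (3 * L₂ ^ 2) := by
    field_simp
    ring
  nlinarith [key, hsign, hfinal]
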